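/- Let x_1,…,x_n ∈ ℝ^d with labels y_i ∈ {−1,+1} be such that the hard-margin SVM with intercept is feasible, and let (ŵ₁, b̂₁) be its solution: minimize ‖w‖₂ over (w,b) subject to y_i(⟨x_i, w⟩ + b) ≥ 1 for all i ∈ [n]. Fix any δ > 0 and define ŵ_δ := ((δ+1)/2)·ŵ₁ and b̂_δ := ((δ+1)/2)·b̂₁ + (δ−1)/2. Then (ŵ_δ, b̂_δ) is an optimal solution of the CS-SVM with intercept and margin-ratio δ: minimize ‖w‖₂ over (w,b) subject to ⟨x_i, w⟩ + b ≥ δ whenever y_i = +1 and ⟨x_i, w⟩ + b ≤ −1 whenever y_i = −1. -/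

import Mathlib

open scoped RealInnerProductSpace

theorem stmt5 {n d : ℕ}
    (x : Fin n → EuclideanSpace ℝ (Fin d)) (y : Fin n → ℝ)
    (hy : ∀ i, y i = 1 ∨ y i = -1)
    (w1 : EuclideanSpace ℝ (Fin d)) (b1 : ℝ)
    (hfeas : ∀ i, 1 ≤ y i * (⟪x i, w1⟫ + b1))
    (hopt : ∀ (w : EuclideanSpace ℝ (Fin d)) (b : ℝ),
      (∀ i, 1 ≤ y i * (⟪x i, w⟫ + b)) → ‖w1‖ ≤ ‖w‖)
    (δ : ℝ) (hδ : 0 < δ) :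
    ((∀ i, y i = 1 →
        δ ≤ ⟪x i, ((δ + 1) / 2) • w1⟫ + (((δ + 1) / 2) * b1 + (δ - 1) / 2)) ∧
     (∀ i, y i = -1 →
        ⟪x i, ((δ + 1) / 2) • w1⟫ + (((δ + 1) / 2) * b1 + (δ - 1) / 2) ≤ -1)) ∧
    ∀ (w : EuclideanSpace ℝ (Fin d)) (b : ℝ),
      ((∀ i, y i = 1 → δ ≤ ⟪x i, w⟫ + b) ∧ (∀ i, y i = -1 → ⟪x i, w⟫ + b ≤ -1)) →
      ‖((δ + 1) / 2) • w1‖ ≤ ‖w‖ := by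
  have hpos : (0:ℝ) < (δ + 1) / 2 := by linarith
  constructor
  · constructor
    · intro i hi
      have h := hfeas i
      rw [hi, one_mul] at h
      rw [real_inner_smul_right]
      nlinarith
    · intro i hi
      have h := hfeas i
      rw [hi] at h
      rw [real_inner_smul_right]
      nlinarith
  · intro w b ⟨hp, hm⟩
    set c : ℝ := 2 / (δ + 1) with hc
    have hcpos : 0 < c := by positivity
    have hfeas' : ∀ i, 1 ≤ y i * (⟪x i, c • w⟫ + (c * (b - (δ - 1) / 2))) := by
      intro i
      rw [real_inner_smul_right]
      rcases hy i with hi | hi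
      · have h := hp i hi
        rw [hi, one_mul]
        have : c * (δ - (δ - 1) / 2) = 1 := by
          rw [hc, div_mul_eq_mul_div, div_eq_iff (by linarith)]; ring
        nlinarith
      · have h := hm i hi
        rw [hi]
        have : c * (-1 - (δ - 1) / 2) = -1 := by
          rw [hc, div_mul_eq_mul_div, div_eq_iff (by linarith)]; ring
        nlinarith
    have h1 := hopt (c • w) (c * (b - (δ - 1) / 2)) hfeas'
    rw [norm_smul] at h1 ⊢
    have : ‖c‖ = c := abs_of_pos hcpos
    rw [this] at h1
    have h2 : ‖((δ + 1) / 2 : ℝ)‖ = (δ + 1) / 2 := abs_of_pos hpos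
    rw [h2]
    have hci : (δ + 1) / 2 * c = 1 := by rw [hc, mul_comm, div_mul_eq_mul_div, div_eq_iff (by linarith)]; ring
    nlinarith [norm_nonneg w, norm_nonneg w1]
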